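/- (Data processing inequality.) Let φ : (0,∞) → [0,∞) be convex with φ(1) = 0 and strictly convex at 1, let P, Q be probability measures on (𝒳, ℱ) with λ-densities, and let T : 𝒳 → 𝒴 be a measurable map into a measurable space (𝒴, 𝒢). Then D_φ(P∘T⁻¹, Q∘T⁻¹) ≤ D_φ(P, Q), where the φ-divergence of the pushforward measures is computed with densities taken with respect to the finite dominating measure (P + Q)∘T⁻¹. -/

import Mathlib

open Set Filter MeasureTheory
open scoped ENNReal Topology

/-- `φ` is strictly convex at the point `1`. -/
def StrictlyConvexAtOne (φ : ℝ → ℝ) : Prop :=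
  ∀ ⦃x y a b : ℝ⦄, x ∈ Set.Ioi (0:ℝ) → y ∈ Set.Ioi (0:ℝ) → x ≠ y →
    0 < a → 0 < b → a + b = 1 → a * x + b * y = 1 → φ 1 < a * φ x + b * φ y

/-- The Csiszár–Ali–Silvey–Morimoto φ-divergence
`D_φ(P,Q) := ∫_{{f_P·f_Q > 0}} φ(f_P/f_Q) dQ + φ(0)·Q[{f_P = 0}] + φ*(0)·P[{f_Q = 0}]`
of `P := λ.withDensity f_P` from `Q := λ.withDensity f_Q`; the boundary values
`φ0 = φ(0) := lim_{t↓0} φ(t)` and `φstar0 = φ*(0) := lim_{t→∞} φ(t)/t` are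
elements of `[0,∞]`, and the conventions `φ(0)·0 := 0`, `φ*(0)·0 := 0` hold
automatically in `ℝ≥0∞`. -/
noncomputable def phiDiv {𝒳 : Type*} [MeasurableSpace 𝒳]
    (φ : ℝ → ℝ) (φ0 φstar0 : ℝ≥0∞)
    (lam : Measure 𝒳) (fP fQ : 𝒳 → ℝ≥0∞) : ℝ≥0∞ :=
  (∫⁻ x in {x | 0 < fP x ∧ 0 < fQ x},
      ENNReal.ofReal (φ ((fP x / fQ x).toReal)) ∂(lam.withDensity fQ))
    + φ0 * (lam.withDensity fQ) {x | fP x = 0}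
    + φstar0 * (lam.withDensity fP) {x | fQ x = 0}

namespace PhiDivAux


open Classical in
/-- joint (perspective-type) integrand -/
noncomputable def gg2 (φ : ℝ → ℝ) (φ0 φstar0 : ℝ≥0∞) (u v : ℝ≥0∞) : ℝ≥0∞ :=
  if u = 0 then φ0 * v else if v = 0 then φstar0 * u
  else v * ENNReal.ofReal (φ ((u / v).toReal))

open Classical in
/-- one-variable version on `[0,1]`, `v = 1 - u` -/
noncomputable def gg (φ : ℝ → ℝ) (φ0 φstar0 : ℝ≥0∞) (t : ℝ) : ℝ≥0∞ :=
  if t ≤ 0 then φ0 else if 1 ≤ t then φstar0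
  else ENNReal.ofReal ((1 - t) * φ (t / (1 - t)))

lemma measurable_gg2 {𝒳 : Type*} [MeasurableSpace 𝒳] {φ : ℝ → ℝ} (hφ : Measurable φ)
    (φ0 φstar0 : ℝ≥0∞) {u v : 𝒳 → ℝ≥0∞} (hu : Measurable u) (hv : Measurable v) :
    Measurable (fun x => gg2 φ φ0 φstar0 (u x) (v x)) := by
  unfold gg2
  refine Measurable.ite (hu (measurableSet_singleton 0)) (measurable_const.mul hv) ?_
  refine Measurable.ite (hv (measurableSet_singleton 0)) (measurable_const.mul hu) ?_
  exact hv.mul (ENNReal.measurable_ofReal.comp (hφ.comp (hu.div hv).ennreal_toReal))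

lemma phiDiv_eq_lintegral_gg2 {𝒳 : Type*} [MeasurableSpace 𝒳] (μ : Measure 𝒳)
    (φ : ℝ → ℝ) (φ0 φstar0 : ℝ≥0∞) {fP fQ : 𝒳 → ℝ≥0∞}
    (hfP : Measurable fP) (hfQ : Measurable fQ)
    (hmeas : Measurable fun x => ENNReal.ofReal (φ ((fP x / fQ x).toReal))) :
    phiDiv φ φ0 φstar0 μ fP fQ = ∫⁻ x, gg2 φ φ0 φstar0 (fP x) (fQ x) ∂μ := by
  have hS0 : MeasurableSet {x | fP x = 0} := hfP (measurableSet_singleton 0)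
  have hT1 : MeasurableSet {x | fQ x = 0} := hfQ (measurableSet_singleton 0)
  have hS2 : MeasurableSet {x | 0 < fP x ∧ 0 < fQ x} := by
    have : {x | 0 < fP x ∧ 0 < fQ x} = {x | fP x = 0}ᶜ ∩ {x | fQ x = 0}ᶜ := by
      ext x; simp [pos_iff_ne_zero]
    rw [this]; exact (hS0.compl).inter (hT1.compl)
  -- split the RHS
  have hsplit : ∫⁻ x, gg2 φ φ0 φstar0 (fP x) (fQ x) ∂μ
      = (∫⁻ x in {x | fP x = 0}, gg2 φ φ0 φstar0 (fP x) (fQ x) ∂μ)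
        + ((∫⁻ x in {x | fP x = 0}ᶜ ∩ {x | fQ x = 0}, gg2 φ φ0 φstar0 (fP x) (fQ x) ∂μ)
          + ∫⁻ x in {x | fP x = 0}ᶜ \ {x | fQ x = 0}, gg2 φ φ0 φstar0 (fP x) (fQ x) ∂μ) := by
    rw [← lintegral_add_compl (fun x => gg2 φ φ0 φstar0 (fP x) (fQ x)) hS0]
    congr 1
    rw [← lintegral_inter_add_diff (fun x => gg2 φ φ0 φstar0 (fP x) (fQ x)) _ hT1]
  rw [hsplit]
  have e0 : ∫⁻ x in {x | fP x = 0}, gg2 φ φ0 φstar0 (fP x) (fQ x) ∂μ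
      = φ0 * (μ.withDensity fQ) {x | fP x = 0} := by
    rw [withDensity_apply _ hS0, ← lintegral_const_mul φ0 hfQ]
    refine setLIntegral_congr_fun hS0 (fun x hx => ?_)
    simp only [mem_setOf_eq] at hx
    simp [gg2, hx]
  have e1 : ∫⁻ x in {x | fP x = 0}ᶜ ∩ {x | fQ x = 0}, gg2 φ φ0 φstar0 (fP x) (fQ x) ∂μ
      = φstar0 * (μ.withDensity fP) {x | fQ x = 0} := by
    rw [withDensity_apply _ hT1, ← lintegral_const_mul φstar0 hfP]
    have : ∫⁻ x in {x | fQ x = 0}, φstar0 * fP x ∂μ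
        = (∫⁻ x in {x | fQ x = 0} ∩ {x | fP x = 0}, φstar0 * fP x ∂μ)
          + ∫⁻ x in {x | fQ x = 0} \ {x | fP x = 0}, φstar0 * fP x ∂μ := by
      rw [lintegral_inter_add_diff _ _ hS0]
    rw [this]
    have z1 : ∫⁻ x in {x | fQ x = 0} ∩ {x | fP x = 0}, φstar0 * fP x ∂μ = 0 := by
      rw [setLIntegral_congr_fun (hT1.inter hS0) (fun x hx => ?_)]
      · exact lintegral_zero
      · simp only [mem_inter_iff, mem_setOf_eq] at hx
        simp [hx.2]
    rw [z1, zero_add]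
    have hseteq : {x | fP x = 0}ᶜ ∩ {x | fQ x = 0} = {x | fQ x = 0} \ {x | fP x = 0} := by
      ext x; simp [Set.mem_diff, and_comm]
    rw [hseteq]
    refine setLIntegral_congr_fun (hT1.diff hS0) (fun x hx => ?_)
    simp only [Set.mem_diff, mem_setOf_eq] at hx
    simp [gg2, hx.1, hx.2]
  have e2 : ∫⁻ x in {x | fP x = 0}ᶜ \ {x | fQ x = 0}, gg2 φ φ0 φstar0 (fP x) (fQ x) ∂μ
      = ∫⁻ x in {x | 0 < fP x ∧ 0 < fQ x},
          ENNReal.ofReal (φ ((fP x / fQ x).toReal)) ∂(μ.withDensity fQ) := by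
    have hseteq : {x | fP x = 0}ᶜ \ {x | fQ x = 0} = {x | 0 < fP x ∧ 0 < fQ x} := by
      ext x; simp [pos_iff_ne_zero, Set.mem_diff]
    rw [hseteq, setLIntegral_withDensity_eq_setLIntegral_mul μ hfQ hmeas hS2]
    refine setLIntegral_congr_fun hS2 (fun x hx => ?_)
    simp only [mem_setOf_eq] at hx
    simp only [gg2, if_neg hx.1.ne', if_neg hx.2.ne', Pi.mul_apply]
  rw [e0, e1, e2, phiDiv]
  ring

lemma gg2_eq_gg (φ : ℝ → ℝ) (φ0 φstar0 : ℝ≥0∞) {u v : ℝ≥0∞} (huv : u + v = 1) :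
    gg2 φ φ0 φstar0 u v = gg φ φ0 φstar0 u.toReal := by
  have hune : u ≠ ∞ := ne_top_of_le_ne_top ENNReal.one_ne_top (huv ▸ le_self_add)
  have hvne : v ≠ ∞ := ne_top_of_le_ne_top ENNReal.one_ne_top (huv ▸ le_add_self)
  by_cases hu : u = 0
  · have hv : v = 1 := by simpa [hu] using huv
    simp [gg2, gg, hu, hv]
  · by_cases hv : v = 0
    · have hu1 : u = 1 := by simpa [hv] using huv
      norm_num [gg2, gg, hu1, hv]
    · have htadd : u.toReal + v.toReal = 1 := by
        rw [← ENNReal.toReal_add hune hvne, huv, ENNReal.toReal_one]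
      have hut : 0 < u.toReal := ENNReal.toReal_pos hu hune
      have hvt : 0 < v.toReal := ENNReal.toReal_pos hv hvne
      have h1 : ¬ (u.toReal ≤ 0) := not_le.2 hut
      have h2 : ¬ ((1:ℝ) ≤ u.toReal) := by linarith
      have hveq : 1 - u.toReal = v.toReal := by linarith
      rw [gg2, gg, if_neg hu, if_neg hv, if_neg h1, if_neg h2, hveq,
        ENNReal.ofReal_mul hvt.le, ENNReal.ofReal_toReal hvne, ENNReal.toReal_div]

lemma gg2_homog (φ : ℝ → ℝ) (φ0 φstar0 : ℝ≥0∞) {u v c : ℝ≥0∞} (hc : c ≠ 0) (hc' : c ≠ ∞) :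
    c * gg2 φ φ0 φstar0 (u / c) (v / c) = gg2 φ φ0 φstar0 u v := by
  have hu0 : u / c = 0 ↔ u = 0 := by
    rw [ENNReal.div_eq_zero_iff]; simp [hc']
  have hv0 : v / c = 0 ↔ v = 0 := by
    rw [ENNReal.div_eq_zero_iff]; simp [hc']
  by_cases hu : u = 0
  · rw [hu, ENNReal.zero_div, gg2, gg2]
    simp only [eq_self_iff_true, if_true]
    rw [← mul_assoc, mul_comm c φ0, mul_assoc, ENNReal.mul_div_cancel hc hc']
  · have hu' : u / c ≠ 0 := fun h => hu (hu0.1 h)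
    by_cases hv : v = 0
    · rw [hv, ENNReal.zero_div, gg2, gg2, if_neg hu', if_neg hu]
      simp only [eq_self_iff_true, if_true]
      rw [← mul_assoc, mul_comm c φstar0, mul_assoc, ENNReal.mul_div_cancel hc hc']
    · have hv' : v / c ≠ 0 := fun h => hv (hv0.1 h)
      rw [gg2, gg2, if_neg hu', if_neg hu, if_neg hv', if_neg hv]
      have hdiv : u / c / (v / c) = u / v := by
        rw [div_eq_mul_inv u c, div_eq_mul_inv v c,
          ENNReal.mul_div_mul_right u v (by simpa using hc') (by simpa using hc)]
      rw [hdiv, ← mul_assoc, ENNReal.mul_div_cancel hc hc']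


lemma convexOn_Gr {φ : ℝ → ℝ} (hconv : ConvexOn ℝ (Ioi (0:ℝ)) φ) :
    ConvexOn ℝ (Ioo (0:ℝ) 1) (fun t => (1 - t) * φ (t / (1 - t))) := by
  refine ⟨convex_Ioo 0 1, ?_⟩
  rintro x ⟨hx0, hx1⟩ y ⟨hy0, hy1⟩ α β hα hβ hαβ
  simp only [smul_eq_mul]
  set z := α * x + β * y with hz
  have hz0 : 0 < z := by
    rcases hα.eq_or_lt with h|h
    · have hβ1 : β = 1 := by linarith
      rw [hz, ← h, hβ1]; simpa using hy0
    · nlinarith [mul_nonneg hβ hy0.le]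
  have hz1 : z < 1 := by
    rcases hα.eq_or_lt with h|h
    · have hβ1 : β = 1 := by linarith
      rw [hz, ← h, hβ1]; simpa using hy1
    · nlinarith [mul_nonneg hβ (by linarith : (0:ℝ) ≤ 1 - y), mul_pos h (by linarith : (0:ℝ) < 1 - x)]
  have hdx : (0:ℝ) < 1 - x := by linarith
  have hdy : (0:ℝ) < 1 - y := by linarith
  have hdz : (0:ℝ) < 1 - z := by linarith
  have hsum : α * (1 - x) + β * (1 - y) = 1 - z := by rw [hz]; ring_nf; linarith
  have hmemx : x / (1 - x) ∈ Ioi (0:ℝ) := div_pos hx0 hdx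
  have hmemy : y / (1 - y) ∈ Ioi (0:ℝ) := div_pos hy0 hdy
  have hl1 : (0:ℝ) ≤ α * (1 - x) / (1 - z) := div_nonneg (mul_nonneg hα hdx.le) hdz.le
  have hl2 : (0:ℝ) ≤ β * (1 - y) / (1 - z) := div_nonneg (mul_nonneg hβ hdy.le) hdz.le
  have hl12 : α * (1 - x) / (1 - z) + β * (1 - y) / (1 - z) = 1 := by
    rw [← add_div, hsum, div_self hdz.ne']
  have hcomb : (α * (1 - x) / (1 - z)) • (x / (1 - x)) + (β * (1 - y) / (1 - z)) • (y / (1 - y))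
      = z / (1 - z) := by
    simp only [smul_eq_mul]
    field_simp
    ring
  have key := hconv.2 hmemx hmemy hl1 hl2 hl12
  rw [hcomb] at key
  simp only [smul_eq_mul] at key
  have key' := mul_le_mul_of_nonneg_left key hdz.le
  calc (1 - z) * φ (z / (1 - z))
      ≤ (1 - z) * (α * (1 - x) / (1 - z) * φ (x / (1 - x))
          + β * (1 - y) / (1 - z) * φ (y / (1 - y))) := key'
  _ = α * ((1 - x) * φ (x / (1 - x))) + β * ((1 - y) * φ (y / (1 - y))) := by
      field_simp

noncomputable def slopeInf (Gr : ℝ → ℝ) (r : ℝ) : ℝ :=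
  sInf ((fun s => (Gr s - Gr r) / (s - r)) '' (Ioo r 1))

lemma tangent_spec {Gr : ℝ → ℝ} (hG : ConvexOn ℝ (Ioo (0:ℝ) 1) Gr) {r : ℝ}
    (hr : r ∈ Ioo (0:ℝ) 1) :
    (∀ t ∈ Ioo (0:ℝ) 1, Gr r + slopeInf Gr r * (t - r) ≤ Gr t) ∧
    (∀ s ∈ Ioo (0:ℝ) 1, r < s → slopeInf Gr r ≤ (Gr s - Gr r) / (s - r)) ∧
    (∀ s ∈ Ioo (0:ℝ) 1, s < r → (Gr s - Gr r) / (s - r) ≤ slopeInf Gr r) := by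
  obtain ⟨hr0, hr1⟩ := hr
  have hhalf : r / 2 ∈ Ioo (0:ℝ) 1 := ⟨by linarith, by linarith⟩
  have hne : ((fun s => (Gr s - Gr r) / (s - r)) '' (Ioo r 1)).Nonempty := by
    exact ⟨_, ⟨(r+1)/2, ⟨by linarith, by linarith⟩, rfl⟩⟩
  have hbdd : BddBelow ((fun s => (Gr s - Gr r) / (s - r)) '' (Ioo r 1)) := by
    refine ⟨(Gr (r/2) - Gr r) / (r/2 - r), ?_⟩
    rintro _ ⟨s, ⟨hs1, hs2⟩, rfl⟩
    exact hG.secant_mono ⟨hr0, hr1⟩ hhalf ⟨hr0.trans hs1, hs2⟩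
      (by intro h; linarith) (ne_of_gt hs1) (by linarith)
  have h2 : ∀ s ∈ Ioo (0:ℝ) 1, r < s → slopeInf Gr r ≤ (Gr s - Gr r) / (s - r) := by
    intro s hs hrs
    exact csInf_le hbdd ⟨s, ⟨hrs, hs.2⟩, rfl⟩
  have h3 : ∀ s ∈ Ioo (0:ℝ) 1, s < r → (Gr s - Gr r) / (s - r) ≤ slopeInf Gr r := by
    intro s hs hsr
    refine le_csInf hne ?_
    rintro _ ⟨s', ⟨hs'1, hs'2⟩, rfl⟩
    exact hG.secant_mono ⟨hr0, hr1⟩ hs ⟨hr0.trans hs'1, hs'2⟩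
      (ne_of_lt hsr) (ne_of_gt hs'1) (by linarith)
  refine ⟨?_, h2, h3⟩
  intro t ht
  rcases lt_trichotomy t r with h | h | h
  · have := h3 t ht h
    rw [div_le_iff_of_neg (by linarith : t - r < 0)] at this
    linarith
  · rw [h]; simp
  · have := h2 t ht h
    rw [le_div_iff₀ (by linarith : 0 < t - r)] at this
    linarith


lemma tendsto_atTop_of_ofReal_top {ι : Type*} {l : Filter ι} {f : ι → ℝ}
    (h : Tendsto (fun x => ENNReal.ofReal (f x)) l (𝓝 ⊤)) : Tendsto f l atTop := by
  rw [tendsto_atTop]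
  intro M
  have hM := (ENNReal.tendsto_nhds_top_iff_nnreal.1 h) (Real.toNNReal M)
  filter_upwards [hM] with x hx
  have hcoe : (Real.toNNReal M : ℝ≥0∞) < (Real.toNNReal (f x) : ℝ≥0∞) := by
    rwa [ENNReal.ofReal] at hx
  have h1 : Real.toNNReal M < Real.toNNReal (f x) := ENNReal.coe_lt_coe.1 hcoe
  have h2 : 0 < f x := Real.toNNReal_pos.1 (lt_of_le_of_lt zero_le h1)
  have h3 : (Real.toNNReal M : ℝ) < (Real.toNNReal (f x) : ℝ) := by exact_mod_cast h1
  rw [Real.coe_toNNReal _ h2.le] at h3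
  exact (Real.le_coe_toNNReal M).trans h3.le

lemma tendsto_toReal_of_ofReal {ι : Type*} {l : Filter ι} {f : ι → ℝ}
    (hf : ∀ᶠ x in l, 0 ≤ f x) {c : ℝ≥0∞} (hc : c ≠ ⊤)
    (h : Tendsto (fun x => ENNReal.ofReal (f x)) l (𝓝 c)) : Tendsto f l (𝓝 c.toReal) := by
  refine ((ENNReal.tendsto_toReal hc).comp h).congr' ?_
  filter_upwards [hf] with x hx
  exact ENNReal.toReal_ofReal hx

variable {φ : ℝ → ℝ} {φ0 φstar0 : ℝ≥0∞}

lemma tendsto_Gr_zero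
    (hφ0 : Tendsto (fun t : ℝ => ENNReal.ofReal (φ t)) (nhdsWithin 0 (Ioi (0:ℝ))) (nhds φ0)) :
    Tendsto (fun t => ENNReal.ofReal ((1 - t) * φ (t / (1 - t))))
      (𝓝[Ioo (0:ℝ) 1] 0) (𝓝 φ0) := by
  have hmap : Tendsto (fun t : ℝ => t / (1 - t)) (𝓝[Ioo (0:ℝ) 1] 0) (𝓝[Ioi 0] 0) := by
    rw [tendsto_nhdsWithin_iff]
    constructor
    · have hc : ContinuousAt (fun t : ℝ => t / (1 - t)) 0 := by
        exact continuousAt_id.div (continuousAt_const.sub continuousAt_id) (by norm_num)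
      have := hc.tendsto.mono_left (nhdsWithin_le_nhds (s := Ioo (0:ℝ) 1))
      simpa using this
    · filter_upwards [self_mem_nhdsWithin] with t ht
      exact div_pos ht.1 (by linarith [ht.2])
  have h2 : Tendsto (fun t : ℝ => ENNReal.ofReal (φ (t / (1 - t)))) (𝓝[Ioo (0:ℝ) 1] 0)
      (𝓝 φ0) := hφ0.comp hmap
  have h1 : Tendsto (fun t : ℝ => ENNReal.ofReal (1 - t)) (𝓝[Ioo (0:ℝ) 1] 0) (𝓝 1) := by
    have hc : ContinuousAt (fun t : ℝ => ENNReal.ofReal (1 - t)) 0 :=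
      ENNReal.continuous_ofReal.continuousAt.comp (continuousAt_const.sub continuousAt_id)
    have := hc.tendsto.mono_left (nhdsWithin_le_nhds (s := Ioo (0:ℝ) 1))
    simpa using this
  have hprod := ENNReal.Tendsto.mul h1 (Or.inl one_ne_zero) h2 (Or.inr ENNReal.one_ne_top)
  rw [one_mul] at hprod
  refine hprod.congr' ?_
  filter_upwards [self_mem_nhdsWithin] with t ht
  rw [← ENNReal.ofReal_mul (by linarith [ht.2] : (0:ℝ) ≤ 1 - t)]

lemma tendsto_Gr_one
    (hφstar0 : Tendsto (fun t : ℝ => ENNReal.ofReal (φ t / t)) atTop (nhds φstar0)) :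
    Tendsto (fun t => ENNReal.ofReal ((1 - t) * φ (t / (1 - t))))
      (𝓝[Ioo (0:ℝ) 1] 1) (𝓝 φstar0) := by
  have hmap : Tendsto (fun t : ℝ => t / (1 - t)) (𝓝[Ioo (0:ℝ) 1] 1) atTop := by
    have h1 : Tendsto (fun t : ℝ => t) (𝓝[Ioo (0:ℝ) 1] 1) (𝓝 1) :=
      tendsto_id.mono_left nhdsWithin_le_nhds
    have h2 : Tendsto (fun t : ℝ => 1 - t) (𝓝[Ioo (0:ℝ) 1] 1) (𝓝[>] 0) := by
      rw [tendsto_nhdsWithin_iff]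
      constructor
      · have hc : ContinuousAt (fun t : ℝ => 1 - t) 1 := continuousAt_const.sub continuousAt_id
        have := hc.tendsto.mono_left (nhdsWithin_le_nhds (s := Ioo (0:ℝ) 1))
        simpa using this
      · filter_upwards [self_mem_nhdsWithin] with t ht
        simpa using ht.2
    have h3 : Tendsto (fun t : ℝ => (1 - t)⁻¹) (𝓝[Ioo (0:ℝ) 1] 1) atTop :=
      tendsto_inv_nhdsGT_zero.comp h2
    have := h1.pos_mul_atTop one_pos h3
    refine this.congr fun t => ?_
    rw [div_eq_mul_inv]
  have h2 : Tendsto (fun t : ℝ => ENNReal.ofReal (φ (t / (1 - t)) / (t / (1 - t))))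
      (𝓝[Ioo (0:ℝ) 1] 1) (𝓝 φstar0) := hφstar0.comp hmap
  have h1 : Tendsto (fun t : ℝ => ENNReal.ofReal t) (𝓝[Ioo (0:ℝ) 1] 1) (𝓝 1) := by
    have hc : ContinuousAt (fun t : ℝ => ENNReal.ofReal t) 1 :=
      ENNReal.continuous_ofReal.continuousAt
    have := hc.tendsto.mono_left (nhdsWithin_le_nhds (s := Ioo (0:ℝ) 1))
    simpa using this
  have hprod := ENNReal.Tendsto.mul h1 (Or.inl one_ne_zero) h2 (Or.inr ENNReal.one_ne_top)
  rw [one_mul] at hprod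
  refine hprod.congr' ?_
  filter_upwards [self_mem_nhdsWithin] with t ht
  have ht0 : 0 < t := ht.1
  have ht1 : 0 < 1 - t := by linarith [ht.2]
  have hu : 0 < t / (1 - t) := div_pos ht0 ht1
  rw [← ENNReal.ofReal_mul ht0.le]
  congr 1
  field_simp

lemma ofReal_integral_le {α : Type*} [MeasurableSpace α] {μ : Measure α} {f : α → ℝ}
    (hf : Integrable f μ) :
    ENNReal.ofReal (∫ x, f x ∂μ) ≤ ∫⁻ x, ENNReal.ofReal (f x) ∂μ := by
  calc ENNReal.ofReal (∫ x, f x ∂μ) ≤ ENNReal.ofReal (∫ x, max (f x) 0 ∂μ) :=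
    ENNReal.ofReal_le_ofReal (integral_mono hf hf.pos_part (fun x => le_max_left _ _))
  _ = ∫⁻ x, ENNReal.ofReal (max (f x) 0) ∂μ :=
    ofReal_integral_eq_lintegral_ofReal hf.pos_part (ae_of_all _ fun x => le_max_right _ _)
  _ = ∫⁻ x, ENNReal.ofReal (f x) ∂μ := by
    refine lintegral_congr fun x => ?_
    rcases le_total (f x) 0 with h | h
    · rw [max_eq_right h, ENNReal.ofReal_zero, eq_comm]
      exact ENNReal.ofReal_eq_zero.2 h
    · rw [max_eq_left h]

lemma jensen_core {𝒳 𝒴 : Type*} [MeasurableSpace 𝒳] [MeasurableSpace 𝒴]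
    (ν : Measure 𝒳) [IsFiniteMeasure ν] {T : 𝒳 → 𝒴} (hT : Measurable T)
    {p : 𝒳 → ℝ≥0∞} (hp : AEMeasurable p ν) (hp1 : ∀ᵐ x ∂ν, p x ≤ 1)
    {p' : 𝒴 → ℝ≥0∞} (hp' : Measurable p') (hp'1 : ∀ᵐ y ∂(ν.map T), p' y ≤ 1)
    (hcond : ∀ B : Set 𝒴, MeasurableSet B →
      ∫⁻ y in B, p' y ∂(ν.map T) = ∫⁻ x in T ⁻¹' B, p x ∂ν)
    (G : ℝ → ℝ≥0∞) (a b : ℕ → ℝ)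
    (hmin : ∀ n, ∀ t ∈ Icc (0:ℝ) 1, ENNReal.ofReal (a n * t + b n) ≤ G t)
    (hsup : ∀ t ∈ Icc (0:ℝ) 1, (⨆ n, ENNReal.ofReal (a n * t + b n)) = G t) :
    ∫⁻ y, G ((p' y).toReal) ∂(ν.map T) ≤ ∫⁻ x, G ((p x).toReal) ∂ν := by
  set μ' := ν.map T with hμ'
  haveI : IsFiniteMeasure μ' := ⟨by
    rw [hμ', Measure.map_apply hT MeasurableSet.univ]; exact measure_lt_top ν _⟩
  have hp'lint : ∫⁻ y, p' y ∂μ' ≠ ∞ := by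
    refine ne_top_of_le_ne_top (measure_ne_top μ' univ) ?_
    calc ∫⁻ y, p' y ∂μ' ≤ ∫⁻ _, 1 ∂μ' := lintegral_mono_ae hp'1
    _ = μ' univ := by simp
  have hplint : ∫⁻ x, p x ∂ν ≠ ∞ := by
    refine ne_top_of_le_ne_top (measure_ne_top ν univ) ?_
    calc ∫⁻ x, p x ∂ν ≤ ∫⁻ _, 1 ∂ν := lintegral_mono_ae hp1
    _ = ν univ := by simp
  have hp'int : Integrable (fun y => (p' y).toReal) μ' :=
    integrable_toReal_of_lintegral_ne_top hp'.aemeasurable hp'lint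
  have hpint : Integrable (fun x => (p x).toReal) ν :=
    integrable_toReal_of_lintegral_ne_top hp hplint
  have hptle : ∀ᵐ x ∂ν, (p x).toReal ∈ Icc (0:ℝ) 1 := by
    filter_upwards [hp1] with x hx
    exact ⟨ENNReal.toReal_nonneg, by
      simpa using ENNReal.toReal_mono ENNReal.one_ne_top hx⟩
  have hp'tle : ∀ᵐ y ∂μ', (p' y).toReal ∈ Icc (0:ℝ) 1 := by
    filter_upwards [hp'1] with y hy
    exact ⟨ENNReal.toReal_nonneg, by
      simpa using ENNReal.toReal_mono ENNReal.one_ne_top hy⟩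
  -- the basic linear step
  have L : ∀ c d : ℝ, (∀ t ∈ Icc (0:ℝ) 1, ENNReal.ofReal (c * t + d) ≤ G t) →
      ∀ B : Set 𝒴, MeasurableSet B →
      ∫⁻ y in B, ENNReal.ofReal (c * (p' y).toReal + d) ∂μ'
        ≤ ∫⁻ x in T ⁻¹' B, G ((p x).toReal) ∂ν := by
    intro c d hcd B hB
    have hSmeas : MeasurableSet {y | 0 < c * (p' y).toReal + d} := by
      have : Measurable fun y => c * (p' y).toReal + d :=
        (hp'.ennreal_toReal.const_mul c).add measurable_const
      exact this measurableSet_Ioi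
    set B' := B ∩ {y | 0 < c * (p' y).toReal + d} with hB'def
    have hB'meas : MeasurableSet B' := hB.inter hSmeas
    have hsplit : ∫⁻ y in B, ENNReal.ofReal (c * (p' y).toReal + d) ∂μ'
        = (∫⁻ y in B', ENNReal.ofReal (c * (p' y).toReal + d) ∂μ')
          + ∫⁻ y in B \ {y | 0 < c * (p' y).toReal + d},
              ENNReal.ofReal (c * (p' y).toReal + d) ∂μ' :=
      (lintegral_inter_add_diff _ B hSmeas).symm
    have hzero : ∫⁻ y in B \ {y | 0 < c * (p' y).toReal + d},
        ENNReal.ofReal (c * (p' y).toReal + d) ∂μ' = 0 := by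
      rw [setLIntegral_congr_fun (hB.diff hSmeas) (fun y hy => ?_), lintegral_zero]
      exact ENNReal.ofReal_eq_zero.2 (not_lt.1 hy.2)
    have key : ∫⁻ y in B', ENNReal.ofReal (c * (p' y).toReal + d) ∂μ'
        = ENNReal.ofReal (∫ y in B', (c * (p' y).toReal + d) ∂μ') := by
      rw [ofReal_integral_eq_lintegral_ofReal]
      · exact ((hp'int.restrict).const_mul c).add (integrable_const d)
      · refine (ae_restrict_iff' hB'meas).2 (ae_of_all _ fun y hy => ?_)
        exact le_of_lt hy.2
    have hint1 : ∫ y in B', (c * (p' y).toReal + d) ∂μ'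
        = c * (∫⁻ y in B', p' y ∂μ').toReal + d * (μ' B').toReal := by
      rw [integral_add ((hp'int.restrict).const_mul c) (integrable_const d),
        integral_const_mul, integral_toReal (hp'.aemeasurable.restrict)
          ((ae_restrict_of_ae (hp'1.mono fun y hy => lt_of_le_of_lt hy ENNReal.one_lt_top))),
        integral_const, smul_eq_mul, measureReal_def, Measure.restrict_apply_univ, mul_comm d]
    have hint2 : ∫ x in T ⁻¹' B', (c * (p x).toReal + d) ∂ν
        = c * (∫⁻ x in T ⁻¹' B', p x ∂ν).toReal + d * (ν (T ⁻¹' B')).toReal := by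
      rw [integral_add ((hpint.restrict).const_mul c) (integrable_const d),
        integral_const_mul, integral_toReal (hp.restrict)
          ((ae_restrict_of_ae (hp1.mono fun x hx => lt_of_le_of_lt hx ENNReal.one_lt_top))),
        integral_const, smul_eq_mul, measureReal_def, Measure.restrict_apply_univ, mul_comm d]
    have heqint : ∫ y in B', (c * (p' y).toReal + d) ∂μ'
        = ∫ x in T ⁻¹' B', (c * (p x).toReal + d) ∂ν := by
      rw [hint1, hint2, hcond B' hB'meas, hμ', Measure.map_apply hT hB'meas]
    calc ∫⁻ y in B, ENNReal.ofReal (c * (p' y).toReal + d) ∂μ'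
        = ENNReal.ofReal (∫ x in T ⁻¹' B', (c * (p x).toReal + d) ∂ν) := by
          rw [hsplit, hzero, add_zero, key, heqint]
    _ ≤ ∫⁻ x in T ⁻¹' B', ENNReal.ofReal (c * (p x).toReal + d) ∂ν :=
          ofReal_integral_le (((hpint.restrict).const_mul c).add (integrable_const d))
    _ ≤ ∫⁻ x in T ⁻¹' B', G ((p x).toReal) ∂ν := by
          refine lintegral_mono_ae (ae_restrict_of_ae ?_)
          filter_upwards [hptle] with x hx
          exact hcd _ hx
    _ ≤ ∫⁻ x in T ⁻¹' B, G ((p x).toReal) ∂ν :=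
          lintegral_mono_set (preimage_mono inter_subset_left)
  -- finite maxima
  set F : ℕ → ℝ → ℝ≥0∞ := fun N t => (Finset.range (N + 1)).sup
    (fun n => ENNReal.ofReal (a n * t + b n)) with hF
  have hFmono : ∀ t, Monotone fun N => F N t := by
    intro t N M hNM
    exact Finset.sup_mono (Finset.range_subset_range.2 (by omega))
  have hFsup : ∀ t, (⨆ N, F N t) = ⨆ n, ENNReal.ofReal (a n * t + b n) := by
    intro t
    refine le_antisymm (iSup_le fun N => Finset.sup_le fun n _ => le_iSup
      (fun n => ENNReal.ofReal (a n * t + b n)) n) (iSup_le fun n => ?_)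
    refine le_iSup_of_le n (Finset.le_sup (f := fun n => ENNReal.ofReal (a n * t + b n)) ?_)
    exact Finset.mem_range.2 (by omega)
  have hFsucc : ∀ N t, F (N+1) t = ENNReal.ofReal (a (N+1) * t + b (N+1)) ⊔ F N t := by
    intro N t
    rw [hF]
    simp only [Finset.range_add_one, Finset.sup_insert]
  have hF0 : ∀ t, F 0 t = ENNReal.ofReal (a 0 * t + b 0) := by
    intro t; rw [hF]; simp
  have hFmeas : ∀ N, Measurable fun y => F N ((p' y).toReal) := by
    intro N
    induction N with
    | zero =>
      simp only [hF0]
      exact ENNReal.measurable_ofReal.comp ((hp'.ennreal_toReal.const_mul _).add measurable_const)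
    | succ N ih =>
      simp only [hFsucc]
      exact (ENNReal.measurable_ofReal.comp
        ((hp'.ennreal_toReal.const_mul _).add measurable_const)).sup ih
  -- key induction
  have key : ∀ N, ∀ B : Set 𝒴, MeasurableSet B →
      ∫⁻ y in B, F N ((p' y).toReal) ∂μ' ≤ ∫⁻ x in T ⁻¹' B, G ((p x).toReal) ∂ν := by
    intro N
    induction N with
    | zero =>
      intro B hB
      simp_rw [hF0]
      exact L (a 0) (b 0) (hmin 0) B hB
    | succ N ih =>
      intro B hB
      have hE : MeasurableSet {y | ENNReal.ofReal (a (N+1) * (p' y).toReal + b (N+1))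
          ≤ F N ((p' y).toReal)} := by
        exact measurableSet_le (ENNReal.measurable_ofReal.comp
          ((hp'.ennreal_toReal.const_mul _).add measurable_const)) (hFmeas N)
      set E := {y | ENNReal.ofReal (a (N+1) * (p' y).toReal + b (N+1)) ≤ F N ((p' y).toReal)}
      have hsplitB : ∫⁻ y in B, F (N+1) ((p' y).toReal) ∂μ'
          = (∫⁻ y in B ∩ E, F (N+1) ((p' y).toReal) ∂μ')
            + ∫⁻ y in B \ E, F (N+1) ((p' y).toReal) ∂μ' :=
        (lintegral_inter_add_diff _ B hE).symm
      have h1 : ∫⁻ y in B ∩ E, F (N+1) ((p' y).toReal) ∂μ'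
          ≤ ∫⁻ x in T ⁻¹' (B ∩ E), G ((p x).toReal) ∂ν := by
        refine le_trans (le_of_eq (setLIntegral_congr_fun (hB.inter hE)
          (fun y hy => ?_))) (ih (B ∩ E) (hB.inter hE))
        rw [hFsucc]; exact sup_eq_right.2 hy.2
      have h2 : ∫⁻ y in B \ E, F (N+1) ((p' y).toReal) ∂μ'
          ≤ ∫⁻ x in T ⁻¹' (B \ E), G ((p x).toReal) ∂ν := by
        refine le_trans (le_of_eq (setLIntegral_congr_fun (hB.diff hE)
          (fun y hy => ?_))) (L (a (N+1)) (b (N+1)) (hmin (N+1)) _ (hB.diff hE))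
        rw [hFsucc]; exact sup_eq_left.2 (le_of_not_ge hy.2)
      calc ∫⁻ y in B, F (N+1) ((p' y).toReal) ∂μ'
          ≤ (∫⁻ x in T ⁻¹' (B ∩ E), G ((p x).toReal) ∂ν)
            + ∫⁻ x in T ⁻¹' (B \ E), G ((p x).toReal) ∂ν := by
            rw [hsplitB]; exact add_le_add h1 h2
      _ = ∫⁻ x in T ⁻¹' B, G ((p x).toReal) ∂ν := by
            rw [preimage_inter, preimage_diff]
            exact lintegral_inter_add_diff _ _ (hT hE)
  -- monotone convergence
  have hGp' : ∫⁻ y, G ((p' y).toReal) ∂μ' = ⨆ N, ∫⁻ y, F N ((p' y).toReal) ∂μ' := by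
    rw [← lintegral_iSup' (fun N => (hFmeas N).aemeasurable)
      (ae_of_all _ fun y => hFmono ((p' y).toReal))]
    refine lintegral_congr_ae ?_
    filter_upwards [hp'tle] with y hy
    rw [hFsup, hsup _ hy]
  rw [hGp']
  refine iSup_le fun N => ?_
  have := key N univ MeasurableSet.univ
  simpa [Measure.restrict_univ] using this

lemma exists_affine_family (φ : ℝ → ℝ)
    (hconv : ConvexOn ℝ (Ioi (0:ℝ)) φ) (hnonneg : ∀ t ∈ Ioi (0:ℝ), 0 ≤ φ t)
    (φ0 φstar0 : ℝ≥0∞)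
    (hφ0 : Tendsto (fun t : ℝ => ENNReal.ofReal (φ t)) (nhdsWithin 0 (Ioi (0:ℝ))) (nhds φ0))
    (hφstar0 : Tendsto (fun t : ℝ => ENNReal.ofReal (φ t / t)) atTop (nhds φstar0)) :
    ∃ a b : ℕ → ℝ,
      (∀ n, ∀ t ∈ Icc (0:ℝ) 1, ENNReal.ofReal (a n * t + b n) ≤ gg φ φ0 φstar0 t) ∧
      (∀ t ∈ Icc (0:ℝ) 1, (⨆ n, ENNReal.ofReal (a n * t + b n)) = gg φ φ0 φstar0 t) := by
  classical
  set Gr : ℝ → ℝ := fun t => (1 - t) * φ (t / (1 - t)) with hGrdef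
  have hG : ConvexOn ℝ (Ioo (0:ℝ) 1) Gr := convexOn_Gr hconv
  have hGc : ContinuousOn Gr (Ioo (0:ℝ) 1) := ConvexOn.continuousOn isOpen_Ioo hG
  have hGnn : ∀ t ∈ Ioo (0:ℝ) 1, 0 ≤ Gr t := fun t ht =>
    mul_nonneg (by linarith [ht.2]) (hnonneg _ (div_pos ht.1 (by linarith [ht.2])))
  have hggIoo : ∀ t ∈ Ioo (0:ℝ) 1, gg φ φ0 φstar0 t = ENNReal.ofReal (Gr t) := by
    intro t ht; rw [gg, if_neg (not_le.2 ht.1), if_neg (not_le.2 ht.2)]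
  have hgg0 : gg φ φ0 φstar0 0 = φ0 := by rw [gg, if_pos le_rfl]
  have hgg1 : gg φ φ0 φstar0 1 = φstar0 := by rw [gg]; norm_num
  have hGr0 : Tendsto (fun t => ENNReal.ofReal (Gr t)) (𝓝[Ioo (0:ℝ) 1] 0) (𝓝 φ0) :=
    tendsto_Gr_zero hφ0
  have hGr1 : Tendsto (fun t => ENNReal.ofReal (Gr t)) (𝓝[Ioo (0:ℝ) 1] 1) (𝓝 φstar0) :=
    tendsto_Gr_one hφstar0
  haveI hNB0 : (𝓝[Ioo (0:ℝ) 1] (0:ℝ)).NeBot := by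
    refine mem_closure_iff_nhdsWithin_neBot.1 ?_
    rw [closure_Ioo (by norm_num : (0:ℝ) ≠ 1)]
    exact ⟨le_rfl, by norm_num⟩
  haveI hNB1 : (𝓝[Ioo (0:ℝ) 1] (1:ℝ)).NeBot := by
    refine mem_closure_iff_nhdsWithin_neBot.1 ?_
    rw [closure_Ioo (by norm_num : (0:ℝ) ≠ 1)]
    exact ⟨by norm_num, le_rfl⟩
  -- enumeration of the rationals in (0,1)
  obtain ⟨e, he⟩ : ∃ e : ℕ → ℚ, Function.Surjective e :=
    ⟨_, (Denumerable.eqv ℚ).symm.surjective⟩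
  set r : ℕ → ℝ := fun n =>
    if ((e n : ℚ) : ℝ) ∈ Ioo (0:ℝ) 1 then ((e n : ℚ) : ℝ) else 1/2 with hrdef
  have hrmem : ∀ n, r n ∈ Ioo (0:ℝ) 1 := by
    intro n; rw [hrdef]; dsimp only; split_ifs with h
    · exact h
    · norm_num
  have hrsur : ∀ q : ℚ, (q:ℝ) ∈ Ioo (0:ℝ) 1 → ∃ n, r n = (q:ℝ) := by
    intro q hq
    obtain ⟨n, hn⟩ := he q
    refine ⟨n, ?_⟩
    rw [hrdef]; dsimp only
    rw [hn, if_pos hq]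
  set a : ℕ → ℝ := fun n => slopeInf Gr (r n) with hadef
  set b : ℕ → ℝ := fun n => Gr (r n) - slopeInf Gr (r n) * r n with hbdef
  have habval : ∀ n t, a n * t + b n = Gr (r n) + slopeInf Gr (r n) * (t - r n) := by
    intro n t; rw [hadef, hbdef]; ring
  -- the minorant property on the open interval
  have hminIoo : ∀ n, ∀ t ∈ Ioo (0:ℝ) 1,
      ENNReal.ofReal (a n * t + b n) ≤ gg φ φ0 φstar0 t := by
    intro n t ht
    rw [hggIoo t ht, habval]
    exact ENNReal.ofReal_le_ofReal ((tangent_spec hG (hrmem n)).1 t ht)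
  -- the minorant property on the closed interval
  have hmin : ∀ n, ∀ t ∈ Icc (0:ℝ) 1, ENNReal.ofReal (a n * t + b n) ≤ gg φ φ0 φstar0 t := by
    intro n t ht
    rcases eq_or_lt_of_le ht.1 with h0 | h0
    · rw [← h0, hgg0]
      have hlin : Tendsto (fun s => ENNReal.ofReal (a n * s + b n)) (𝓝[Ioo (0:ℝ) 1] 0)
          (𝓝 (ENNReal.ofReal (a n * 0 + b n))) := by
        exact (ENNReal.continuous_ofReal.continuousAt.comp
          (((continuous_const.mul continuous_id).add continuous_const).continuousAt)).tendsto.mono_left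
          nhdsWithin_le_nhds
      refine le_of_tendsto_of_tendsto hlin hGr0 ?_
      filter_upwards [self_mem_nhdsWithin] with s hs
      rw [← hggIoo s hs]
      exact hminIoo n s hs
    rcases eq_or_lt_of_le ht.2 with h1 | h1
    · rw [h1, hgg1]
      have hlin : Tendsto (fun s => ENNReal.ofReal (a n * s + b n)) (𝓝[Ioo (0:ℝ) 1] 1)
          (𝓝 (ENNReal.ofReal (a n * 1 + b n))) := by
        exact (ENNReal.continuous_ofReal.continuousAt.comp
          (((continuous_const.mul continuous_id).add continuous_const).continuousAt)).tendsto.mono_left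
          nhdsWithin_le_nhds
      refine le_of_tendsto_of_tendsto hlin hGr1 ?_
      filter_upwards [self_mem_nhdsWithin] with s hs
      rw [← hggIoo s hs]
      exact hminIoo n s hs
    · exact hminIoo n t ⟨h0, h1⟩
  refine ⟨a, b, hmin, fun t ht => le_antisymm (iSup_le fun n => hmin n t ht) ?_⟩
  -- the supremum property
  rcases eq_or_lt_of_le ht.1 with h0 | h0
  · -- t = 0
    rw [← h0, hgg0]
    have hex : ∀ k : ℕ, ∃ q : ℚ, (0:ℝ) < (q:ℝ) ∧ (q:ℝ) < min (1/2 : ℝ) (1/((k:ℝ)+1)) := by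
      intro k; exact exists_rat_btwn (lt_min (by norm_num) (by positivity))
    choose qs hq1 hq2 using hex
    set sk : ℕ → ℝ := fun k => (qs k : ℝ) with hskdef
    have hsklt : ∀ k, sk k < 1/2 := fun k => lt_of_lt_of_le (hq2 k) (min_le_left _ _)
    have hskmem : ∀ k, sk k ∈ Ioo (0:ℝ) 1 := fun k => ⟨hq1 k, by linarith [hsklt k]⟩
    have hskt : Tendsto sk atTop (𝓝 0) := by
      have hub : ∀ k : ℕ, sk k ≤ 1/((k:ℝ)+1) := fun k =>
        le_of_lt (lt_of_lt_of_le (hq2 k) (min_le_right _ _))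
      exact tendsto_of_tendsto_of_tendsto_of_le_of_le tendsto_const_nhds
        tendsto_one_div_add_atTop_nhds_zero_nat (fun k => (hq1 k).le) hub
    have hskt' : Tendsto sk atTop (𝓝[Ioo (0:ℝ) 1] 0) :=
      tendsto_nhdsWithin_iff.2 ⟨hskt, Eventually.of_forall hskmem⟩
    obtain ⟨nk, hnk⟩ : ∃ nk : ℕ → ℕ, ∀ k, r (nk k) = sk k := by
      have h := fun k => hrsur (qs k) (hskmem k)
      exact ⟨fun k => (h k).choose, fun k => (h k).choose_spec⟩
    have hhalf : (1/2 : ℝ) ∈ Ioo (0:ℝ) 1 := by norm_num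
    have hup : ∀ k, slopeInf Gr (sk k) ≤ (Gr (1/2) - Gr (sk k))/(1/2 - sk k) := fun k =>
      (tangent_spec hG (hskmem k)).2.1 (1/2) hhalf (hsklt k)
    have hval : ∀ k, a (nk k) * 0 + b (nk k) = Gr (sk k) - slopeInf Gr (sk k) * sk k := by
      intro k; rw [habval, hnk]; ring
    set w : ℕ → ℝ := fun k => Gr (sk k) - (Gr (1/2) - Gr (sk k))/(1/2 - sk k) * sk k with hwdef
    have hwle : ∀ k, w k ≤ Gr (sk k) - slopeInf Gr (sk k) * sk k := by
      intro k
      have h2 := mul_le_mul_of_nonneg_right (hup k) (hq1 k).le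
      rw [hwdef]; dsimp only; linarith
    have hGrof : Tendsto (fun k => ENNReal.ofReal (Gr (sk k))) atTop (𝓝 φ0) := hGr0.comp hskt'
    have hwten : Tendsto (fun k => ENNReal.ofReal (w k)) atTop (𝓝 φ0) := by
      by_cases htop : φ0 = ⊤
      · rw [htop] at hGrof ⊢
        have hGsk : Tendsto (fun k => Gr (sk k)) atTop atTop := tendsto_atTop_of_ofReal_top hGrof
        have hz : Tendsto (fun k => -(Gr (1/2)/(1/2 - sk k) * sk k)) atTop (𝓝 (-(Gr (1/2)/(1/2 - 0) * 0))) := by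
          exact ((tendsto_const_nhds.div (tendsto_const_nhds.sub hskt) (by norm_num)).mul hskt).neg
        have hwge : ∀ k, Gr (sk k) + -(Gr (1/2)/(1/2 - sk k) * sk k) ≤ w k := by
          intro k
          have h2 : (0:ℝ) < 1/2 - sk k := by linarith [hsklt k]
          have h3 : (0:ℝ) ≤ Gr (sk k) := hGnn _ (hskmem k)
          have h5 : (Gr (1/2) - Gr (sk k))/(1/2 - sk k) * sk k
              = Gr (1/2)/(1/2 - sk k) * sk k - Gr (sk k)/(1/2 - sk k) * sk k := by
            rw [sub_div, sub_mul]
          have h4 : (0:ℝ) ≤ Gr (sk k)/(1/2 - sk k) * sk k :=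
            mul_nonneg (div_nonneg h3 h2.le) (hq1 k).le
          rw [hwdef]; dsimp only; rw [h5]; linarith
        have hwtop : Tendsto w atTop atTop :=
          tendsto_atTop_mono hwge (hGsk.atTop_add hz)
        exact ENNReal.tendsto_ofReal_atTop.comp hwtop
      · have hGrr : Tendsto (fun k => Gr (sk k)) atTop (𝓝 φ0.toReal) :=
          tendsto_toReal_of_ofReal (Eventually.of_forall fun k => hGnn _ (hskmem k)) htop hGrof
        have h1 : Tendsto (fun k => (Gr (1/2) - Gr (sk k))/(1/2 - sk k) * sk k) atTop
            (𝓝 ((Gr (1/2) - φ0.toReal)/(1/2 - 0) * 0)) :=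
          ((tendsto_const_nhds.sub hGrr).div (tendsto_const_nhds.sub hskt) (by norm_num)).mul hskt
        have hw : Tendsto w atTop (𝓝 φ0.toReal) := by
          have h2 := hGrr.sub h1
          have h3 : φ0.toReal - (Gr (1/2) - φ0.toReal)/(1/2 - 0) * 0 = φ0.toReal := by ring
          rw [h3] at h2
          exact h2
        have hten := (ENNReal.continuous_ofReal.tendsto _).comp hw
        rwa [ENNReal.ofReal_toReal htop] at hten
    refine le_of_tendsto hwten ?_
    filter_upwards with k
    calc ENNReal.ofReal (w k) ≤ ENNReal.ofReal (a (nk k) * 0 + b (nk k)) := by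
          rw [hval]; exact ENNReal.ofReal_le_ofReal (hwle k)
    _ ≤ ⨆ n, ENNReal.ofReal (a n * 0 + b n) :=
          le_iSup (fun n => ENNReal.ofReal (a n * 0 + b n)) (nk k)
  rcases eq_or_lt_of_le ht.2 with h1 | h1
  · -- t = 1
    rw [h1, hgg1]
    have hex : ∀ k : ℕ, ∃ q : ℚ, max (3/4 : ℝ) (1 - 1/((k:ℝ)+1)) < (q:ℝ) ∧ (q:ℝ) < 1 := by
      intro k
      refine exists_rat_btwn (max_lt (by norm_num) ?_)
      have : (0:ℝ) < 1/((k:ℝ)+1) := by positivity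
      linarith
    choose qs hq1 hq2 using hex
    set sk : ℕ → ℝ := fun k => (qs k : ℝ) with hskdef
    have hsk34 : ∀ k, 3/4 < sk k := fun k => lt_of_le_of_lt (le_max_left _ _) (hq1 k)
    have hskmem : ∀ k, sk k ∈ Ioo (0:ℝ) 1 := fun k => ⟨by linarith [hsk34 k], hq2 k⟩
    have hskt : Tendsto sk atTop (𝓝 1) := by
      have hlow : ∀ k : ℕ, 1 - 1/((k:ℝ)+1) ≤ sk k := fun k =>
        le_of_lt (lt_of_le_of_lt (le_max_right _ _) (hq1 k))
      have hl : Tendsto (fun k : ℕ => 1 - 1/((k:ℝ)+1)) atTop (𝓝 1) := by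
        have := (tendsto_const_nhds (x := (1:ℝ)) (f := atTop (α := ℕ))).sub
          tendsto_one_div_add_atTop_nhds_zero_nat
        simpa using this
      exact tendsto_of_tendsto_of_tendsto_of_le_of_le hl tendsto_const_nhds hlow
        (fun k => (hq2 k).le)
    have hskt' : Tendsto sk atTop (𝓝[Ioo (0:ℝ) 1] 1) :=
      tendsto_nhdsWithin_iff.2 ⟨hskt, Eventually.of_forall hskmem⟩
    obtain ⟨nk, hnk⟩ : ∃ nk : ℕ → ℕ, ∀ k, r (nk k) = sk k := by
      have h := fun k => hrsur (qs k) (hskmem k)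
      exact ⟨fun k => (h k).choose, fun k => (h k).choose_spec⟩
    have hhalf : (1/2 : ℝ) ∈ Ioo (0:ℝ) 1 := by norm_num
    have hdn : ∀ k, (Gr (1/2) - Gr (sk k))/(1/2 - sk k) ≤ slopeInf Gr (sk k) := fun k =>
      (tangent_spec hG (hskmem k)).2.2 (1/2) hhalf (by linarith [hsk34 k])
    have hval : ∀ k, a (nk k) * 1 + b (nk k)
        = Gr (sk k) + slopeInf Gr (sk k) * (1 - sk k) := by
      intro k; rw [habval, hnk]
    set w : ℕ → ℝ := fun k => Gr (sk k) + (Gr (1/2) - Gr (sk k))/(1/2 - sk k) * (1 - sk k)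
      with hwdef
    have hwle : ∀ k, w k ≤ Gr (sk k) + slopeInf Gr (sk k) * (1 - sk k) := by
      intro k
      have h2 := mul_le_mul_of_nonneg_right (hdn k) (by linarith [hq2 k] : (0:ℝ) ≤ 1 - sk k)
      rw [hwdef]; dsimp only; linarith
    have hGrof : Tendsto (fun k => ENNReal.ofReal (Gr (sk k))) atTop (𝓝 φstar0) :=
      hGr1.comp hskt'
    have hwten : Tendsto (fun k => ENNReal.ofReal (w k)) atTop (𝓝 φstar0) := by
      by_cases htop : φstar0 = ⊤
      · rw [htop] at hGrof ⊢
        have hGsk : Tendsto (fun k => Gr (sk k)) atTop atTop := tendsto_atTop_of_ofReal_top hGrof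
        have hwge : ∀ᶠ k in atTop, Gr (sk k) ≤ w k := by
          filter_upwards [hGsk.eventually_ge_atTop (Gr (1/2))] with k hk
          have h2 : 1/2 - sk k ≤ 0 := by linarith [hsk34 k]
          have h3 : Gr (1/2) - Gr (sk k) ≤ 0 := by linarith
          have h4 : (0:ℝ) ≤ (Gr (1/2) - Gr (sk k))/(1/2 - sk k) := by
            rw [div_eq_mul_inv, ← neg_mul_neg]
            exact mul_nonneg (by linarith) (neg_nonneg.2 (inv_nonpos.2 h2))
          have h5 : (0:ℝ) ≤ (Gr (1/2) - Gr (sk k))/(1/2 - sk k) * (1 - sk k) :=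
            mul_nonneg h4 (by linarith [hq2 k])
          rw [hwdef]; dsimp only; linarith
        have hwtop : Tendsto w atTop atTop := tendsto_atTop_mono' atTop hwge hGsk
        exact ENNReal.tendsto_ofReal_atTop.comp hwtop
      · have hGrr : Tendsto (fun k => Gr (sk k)) atTop (𝓝 φstar0.toReal) :=
          tendsto_toReal_of_ofReal (Eventually.of_forall fun k => hGnn _ (hskmem k)) htop hGrof
        have h1 : Tendsto (fun k => (Gr (1/2) - Gr (sk k))/(1/2 - sk k) * (1 - sk k)) atTop
            (𝓝 ((Gr (1/2) - φstar0.toReal)/(1/2 - 1) * (1 - 1))) :=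
          ((tendsto_const_nhds.sub hGrr).div (tendsto_const_nhds.sub hskt) (by norm_num)).mul
            (tendsto_const_nhds.sub hskt)
        have hw : Tendsto w atTop (𝓝 φstar0.toReal) := by
          have h2 := hGrr.add h1
          have h3 : φstar0.toReal + (Gr (1/2) - φstar0.toReal)/(1/2 - 1) * (1 - 1)
              = φstar0.toReal := by ring
          rw [h3] at h2
          exact h2
        have hten := (ENNReal.continuous_ofReal.tendsto _).comp hw
        rwa [ENNReal.ofReal_toReal htop] at hten
    refine le_of_tendsto hwten ?_
    filter_upwards with k
    calc ENNReal.ofReal (w k) ≤ ENNReal.ofReal (a (nk k) * 1 + b (nk k)) := by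
          rw [hval]; exact ENNReal.ofReal_le_ofReal (hwle k)
    _ ≤ ⨆ n, ENNReal.ofReal (a n * 1 + b n) :=
          le_iSup (fun n => ENNReal.ofReal (a n * 1 + b n)) (nk k)
  · -- interior
    have htI : t ∈ Ioo (0:ℝ) 1 := ⟨h0, h1⟩
    rw [hggIoo t htI]
    have hex : ∀ k : ℕ, ∃ q : ℚ, max (t/2) (t - 1/((k:ℝ)+1)) < (q:ℝ) ∧ (q:ℝ) < t := by
      intro k
      refine exists_rat_btwn (max_lt (by linarith) ?_)
      have : (0:ℝ) < 1/((k:ℝ)+1) := by positivity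
      linarith
    choose qs hq1 hq2 using hex
    set sk : ℕ → ℝ := fun k => (qs k : ℝ) with hskdef
    have hsk2 : ∀ k, t/2 < sk k := fun k => lt_of_le_of_lt (le_max_left _ _) (hq1 k)
    have hskmem : ∀ k, sk k ∈ Ioo (0:ℝ) 1 := fun k =>
      ⟨by linarith [hsk2 k], by linarith [hq2 k]⟩
    have hskt : Tendsto sk atTop (𝓝 t) := by
      have hlow : ∀ k : ℕ, t - 1/((k:ℝ)+1) ≤ sk k := fun k =>
        le_of_lt (lt_of_le_of_lt (le_max_right _ _) (hq1 k))
      have hl : Tendsto (fun k : ℕ => t - 1/((k:ℝ)+1)) atTop (𝓝 t) := by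
        have := (tendsto_const_nhds (x := t) (f := atTop (α := ℕ))).sub
          tendsto_one_div_add_atTop_nhds_zero_nat
        simpa using this
      exact tendsto_of_tendsto_of_tendsto_of_le_of_le hl tendsto_const_nhds hlow
        (fun k => (hq2 k).le)
    obtain ⟨nk, hnk⟩ : ∃ nk : ℕ → ℕ, ∀ k, r (nk k) = sk k := by
      have h := fun k => hrsur (qs k) (hskmem k)
      exact ⟨fun k => (h k).choose, fun k => (h k).choose_spec⟩
    set s0 : ℝ := (1+t)/2 with hs0
    set x0 : ℝ := t/4 with hx0
    have hs0mem : s0 ∈ Ioo (0:ℝ) 1 := ⟨by rw [hs0]; linarith, by rw [hs0]; linarith⟩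
    have hx0mem : x0 ∈ Ioo (0:ℝ) 1 := ⟨by rw [hx0]; linarith, by rw [hx0]; linarith⟩
    have hup : ∀ k, slopeInf Gr (sk k) ≤ (Gr s0 - Gr (sk k))/(s0 - sk k) := fun k =>
      (tangent_spec hG (hskmem k)).2.1 s0 hs0mem (by rw [hs0]; linarith [hq2 k])
    have hdn : ∀ k, (Gr x0 - Gr (sk k))/(x0 - sk k) ≤ slopeInf Gr (sk k) := fun k =>
      (tangent_spec hG (hskmem k)).2.2 x0 hx0mem (by rw [hx0]; linarith [hsk2 k])
    have hGct : ContinuousAt Gr t := hGc.continuousAt (isOpen_Ioo.mem_nhds htI)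
    have hGrsk : Tendsto (fun k => Gr (sk k)) atTop (𝓝 (Gr t)) := hGct.tendsto.comp hskt
    have hs0t : s0 - t ≠ 0 := by rw [hs0]; intro h; linarith [sub_eq_zero.1 h]
    have hx0t : x0 - t ≠ 0 := by rw [hx0]; intro h; linarith [sub_eq_zero.1 h]
    have hU : Tendsto (fun k => (Gr s0 - Gr (sk k))/(s0 - sk k) * (t - sk k)) atTop
        (𝓝 ((Gr s0 - Gr t)/(s0 - t) * (t - t))) :=
      ((tendsto_const_nhds.sub hGrsk).div (tendsto_const_nhds.sub hskt) hs0t).mul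
        (tendsto_const_nhds.sub hskt)
    have hD : Tendsto (fun k => (Gr x0 - Gr (sk k))/(x0 - sk k) * (t - sk k)) atTop
        (𝓝 ((Gr x0 - Gr t)/(x0 - t) * (t - t))) :=
      ((tendsto_const_nhds.sub hGrsk).div (tendsto_const_nhds.sub hskt) hx0t).mul
        (tendsto_const_nhds.sub hskt)
    set v : ℕ → ℝ := fun k => Gr (sk k) + slopeInf Gr (sk k) * (t - sk k) with hvdef
    have hlb : ∀ k, Gr (sk k) + (Gr x0 - Gr (sk k))/(x0 - sk k) * (t - sk k) ≤ v k := by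
      intro k
      have := mul_le_mul_of_nonneg_right (hdn k) (by linarith [hq2 k] : (0:ℝ) ≤ t - sk k)
      rw [hvdef]; dsimp only; linarith
    have hub : ∀ k, v k ≤ Gr (sk k) + (Gr s0 - Gr (sk k))/(s0 - sk k) * (t - sk k) := by
      intro k
      have := mul_le_mul_of_nonneg_right (hup k) (by linarith [hq2 k] : (0:ℝ) ≤ t - sk k)
      rw [hvdef]; dsimp only; linarith
    have hlbten : Tendsto (fun k => Gr (sk k) + (Gr x0 - Gr (sk k))/(x0 - sk k) * (t - sk k))
        atTop (𝓝 (Gr t)) := by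
      have := hGrsk.add hD
      simpa using this
    have hubten : Tendsto (fun k => Gr (sk k) + (Gr s0 - Gr (sk k))/(s0 - sk k) * (t - sk k))
        atTop (𝓝 (Gr t)) := by
      have := hGrsk.add hU
      simpa using this
    have hv : Tendsto v atTop (𝓝 (Gr t)) :=
      tendsto_of_tendsto_of_tendsto_of_le_of_le hlbten hubten hlb hub
    have hofv : Tendsto (fun k => ENNReal.ofReal (v k)) atTop (𝓝 (ENNReal.ofReal (Gr t))) :=
      (ENNReal.continuous_ofReal.tendsto _).comp hv
    refine le_of_tendsto hofv ?_
    filter_upwards with k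
    have hvk : a (nk k) * t + b (nk k) = v k := by rw [habval, hnk]
    rw [← hvk]
    exact le_iSup (fun n => ENNReal.ofReal (a n * t + b n)) (nk k)

lemma phiDiv_congr {𝒳 : Type*} [MeasurableSpace 𝒳] (μ : Measure 𝒳)
    (φ φ' : ℝ → ℝ) (h : ∀ t : ℝ, 0 < t → φ t = φ' t) (φ0 φstar0 : ℝ≥0∞)
    {fP fQ : 𝒳 → ℝ≥0∞} (hfP : Measurable fP) (hfQ : Measurable fQ)
    (hfPfin : ∀ᵐ x ∂μ, fP x ≠ ∞) (hfQfin : ∀ᵐ x ∂μ, fQ x ≠ ∞) :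
    phiDiv φ φ0 φstar0 μ fP fQ = phiDiv φ' φ0 φstar0 μ fP fQ := by
  have hS2 : MeasurableSet {x | 0 < fP x ∧ 0 < fQ x} := by
    have h1 : MeasurableSet {x | 0 < fP x} := hfP measurableSet_Ioi
    have h2 : MeasurableSet {x | 0 < fQ x} := hfQ measurableSet_Ioi
    exact h1.inter h2
  unfold phiDiv
  congr 2
  refine lintegral_congr_ae ?_
  have hae : ∀ᵐ x ∂((μ.withDensity fQ).restrict {x | 0 < fP x ∧ 0 < fQ x}),
      fP x ≠ ∞ ∧ fQ x ≠ ∞ :=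
    ae_restrict_of_ae ((withDensity_absolutelyContinuous μ fQ).ae_le (hfPfin.and hfQfin))
  filter_upwards [hae, ae_restrict_mem hS2] with x hx hxm
  have hpos : 0 < (fP x / fQ x).toReal := by
    refine ENNReal.toReal_pos ?_ ?_
    · rw [Ne, ENNReal.div_eq_zero_iff]
      push_neg
      exact ⟨hxm.1.ne', hx.2⟩
    · rw [Ne, ENNReal.div_eq_top]
      push_neg
      exact ⟨fun _ => hxm.2.ne', fun hh => absurd hh hx.1⟩
  rw [h _ hpos]

/-- integral with respect to `withDensity` of the normalized densities -/
lemma setLIntegral_div_withDensity {𝒳 : Type*} [MeasurableSpace 𝒳] (μ : Measure 𝒳)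
    {f s : 𝒳 → ℝ≥0∞} (hf : Measurable f) (hs : Measurable s)
    (hle : ∀ x, f x ≤ s x) (hfin : ∀ᵐ x ∂μ, s x ≠ ∞)
    {C : Set 𝒳} (hC : MeasurableSet C) :
    ∫⁻ x in C, f x / s x ∂(μ.withDensity s) = (μ.withDensity f) C := by
  rw [setLIntegral_withDensity_eq_setLIntegral_mul μ (g := fun x => f x / s x) hs (hf.div hs) hC,
    withDensity_apply _ hC]
  refine lintegral_congr_ae (ae_restrict_of_ae ?_)
  filter_upwards [hfin] with x hx
  simp only [Pi.mul_apply]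
  rcases eq_or_ne (s x) 0 with h0 | h0
  · have hf0 : f x = 0 := le_antisymm (h0 ▸ hle x) zero_le
    simp [h0, hf0]
  · exact ENNReal.mul_div_cancel h0 hx


end PhiDivAux

open PhiDivAux

/-- data processing inequality: let `φ : (0,∞) → [0,∞)` be
convex with `φ(1) = 0` and strictly convex at `1`, let
`P = λ.withDensity f_P`, `Q = λ.withDensity f_Q` be probability measures with
λ-densities, and let `T : 𝒳 → 𝒴` be measurable. Then
`D_φ(P∘T⁻¹, Q∘T⁻¹) ≤ D_φ(P,Q)`, where the φ-divergence of the pushforward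
measures is computed with densities (Radon–Nikodym derivatives) taken with
respect to the finite dominating measure `(P + Q)∘T⁻¹`. -/
theorem phiDiv_data_processing {𝒳 𝒴 : Type*} [MeasurableSpace 𝒳] [MeasurableSpace 𝒴]
    (lam : Measure 𝒳) [SigmaFinite lam]
    (fP fQ : 𝒳 → ℝ≥0∞) (hfP : Measurable fP) (hfQ : Measurable fQ)
    [IsProbabilityMeasure (lam.withDensity fP)]
    [IsProbabilityMeasure (lam.withDensity fQ)]
    (φ : ℝ → ℝ) (hconv : ConvexOn ℝ (Set.Ioi (0:ℝ)) φ)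
    (hnonneg : ∀ t ∈ Set.Ioi (0:ℝ), 0 ≤ φ t)
    (hone : φ 1 = 0) (hstrict : StrictlyConvexAtOne φ)
    (φ0 φstar0 : ℝ≥0∞)
    (hφ0 : Tendsto (fun t : ℝ => ENNReal.ofReal (φ t))
      (nhdsWithin 0 (Set.Ioi (0:ℝ))) (nhds φ0))
    (hφstar0 : Tendsto (fun t : ℝ => ENNReal.ofReal (φ t / t)) atTop (nhds φstar0))
    (T : 𝒳 → 𝒴) (hT : Measurable T) :
    phiDiv φ φ0 φstar0
      ((lam.withDensity fP + lam.withDensity fQ).map T)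
      (((lam.withDensity fP).map T).rnDeriv
        ((lam.withDensity fP + lam.withDensity fQ).map T))
      (((lam.withDensity fQ).map T).rnDeriv
        ((lam.withDensity fP + lam.withDensity fQ).map T))
    ≤ phiDiv φ φ0 φstar0 lam fP fQ := by
  classical
  -- the modified φ, measurable and continuous, agreeing with φ on (0,∞)
  have hφcont : ContinuousOn φ (Ioi (0:ℝ)) := ConvexOn.continuousOn isOpen_Ioi hconv
  set φm : ℝ → ℝ := fun t => φ (Real.exp (Real.log t)) with hφmdef
  have hφmeq : ∀ t : ℝ, 0 < t → φm t = φ t := fun t ht => by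
    rw [hφmdef]; dsimp only; rw [Real.exp_log ht]
  have hφmcont : Continuous fun u : ℝ => φ (Real.exp u) :=
    hφcont.comp_continuous Real.continuous_exp fun x => Real.exp_pos x
  have hφmmeas : Measurable φm := hφmcont.measurable.comp Real.measurable_log
  have hφmconv : ConvexOn ℝ (Ioi (0:ℝ)) φm := by
    refine ⟨convex_Ioi 0, ?_⟩
    intro x hx y hy c d hc hd hcd
    have hxy : c • x + d • y ∈ Ioi (0:ℝ) := (convex_Ioi 0) hx hy hc hd hcd
    rw [hφmeq _ hxy, hφmeq _ hx, hφmeq _ hy]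
    exact hconv.2 hx hy hc hd hcd
  have hφmnn : ∀ t ∈ Ioi (0:ℝ), 0 ≤ φm t := fun t ht => (hφmeq t ht).symm ▸ hnonneg t ht
  have hφm0 : Tendsto (fun t : ℝ => ENNReal.ofReal (φm t)) (𝓝[>] (0:ℝ)) (𝓝 φ0) := by
    refine hφ0.congr' ?_
    filter_upwards [self_mem_nhdsWithin] with t ht
    rw [hφmeq t ht]
  have hφmstar : Tendsto (fun t : ℝ => ENNReal.ofReal (φm t / t)) atTop (𝓝 φstar0) := by
    refine hφstar0.congr' ?_
    filter_upwards [eventually_gt_atTop (0:ℝ)] with t ht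
    rw [hφmeq t ht]
  -- measures and densities
  set P := lam.withDensity fP with hPdef
  set Q := lam.withDensity fQ with hQdef
  set s : 𝒳 → ℝ≥0∞ := fun x => fP x + fQ x with hsdef
  have hsmeas : Measurable s := hfP.add hfQ
  set ν := lam.withDensity s with hνdef
  have hνPQ : P + Q = ν := by
    rw [hPdef, hQdef, hνdef, ← withDensity_add_left hfP]
    rfl
  have hfPlint : ∫⁻ x, fP x ∂lam = 1 := by
    have := measure_univ (μ := P)
    rwa [hPdef, withDensity_apply _ MeasurableSet.univ, setLIntegral_univ] at this
  have hfQlint : ∫⁻ x, fQ x ∂lam = 1 := by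
    have := measure_univ (μ := Q)
    rwa [hQdef, withDensity_apply _ MeasurableSet.univ, setLIntegral_univ] at this
  have hfPfin : ∀ᵐ x ∂lam, fP x ≠ ∞ :=
    (ae_lt_top hfP (by rw [hfPlint]; exact ENNReal.one_ne_top)).mono fun x hx => hx.ne
  have hfQfin : ∀ᵐ x ∂lam, fQ x ≠ ∞ :=
    (ae_lt_top hfQ (by rw [hfQlint]; exact ENNReal.one_ne_top)).mono fun x hx => hx.ne
  have hsfin : ∀ᵐ x ∂lam, s x ≠ ∞ := by
    filter_upwards [hfPfin, hfQfin] with x h1 h2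
    rw [hsdef]; exact ENNReal.add_ne_top.2 ⟨h1, h2⟩
  haveI : IsFiniteMeasure ν := by
    constructor
    rw [hνdef, withDensity_apply _ MeasurableSet.univ, setLIntegral_univ]
    rw [hsdef]
    rw [lintegral_add_left hfP, hfPlint, hfQlint]
    norm_num
  set p : 𝒳 → ℝ≥0∞ := fun x => fP x / s x with hpdef
  set q : 𝒳 → ℝ≥0∞ := fun x => fQ x / s x with hqdef
  have hpmeas : Measurable p := hfP.div hsmeas
  have hqmeas : Measurable q := hfQ.div hsmeas
  have hp1 : ∀ x, p x ≤ 1 := fun x =>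
    ENNReal.div_le_of_le_mul (by rw [one_mul, hsdef]; exact le_self_add)
  have hms0 : MeasurableSet {x | s x = 0} := hsmeas (measurableSet_singleton 0)
  have hνs0 : ν {x | s x = 0} = 0 := by
    rw [hνdef, withDensity_apply _ hms0]
    rw [setLIntegral_congr_fun hms0 (fun x hx => hx)]
    exact lintegral_zero
  have hνsne : ∀ᵐ x ∂ν, s x ≠ 0 := by
    rw [ae_iff]
    simpa using hνs0
  have hνsfin : ∀ᵐ x ∂ν, s x ≠ ∞ := (withDensity_absolutelyContinuous lam s).ae_le hsfin
  have hpq1 : ∀ᵐ x ∂ν, p x + q x = 1 := by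
    filter_upwards [hνsne, hνsfin] with x h0 hfin
    rw [hpdef, hqdef]
    dsimp only
    rw [ENNReal.div_add_div_same, show fP x + fQ x = s x from rfl, ENNReal.div_self h0 hfin]
  -- pushforward measures
  set μ' := ν.map T with hμ'def
  set p' := (P.map T).rnDeriv μ' with hp'def
  set q' := (Q.map T).rnDeriv μ' with hq'def
  have hp'meas : Measurable p' := Measure.measurable_rnDeriv _ _
  have hq'meas : Measurable q' := Measure.measurable_rnDeriv _ _
  haveI : IsProbabilityMeasure (P.map T) := Measure.isProbabilityMeasure_map hT.aemeasurable
  haveI : IsProbabilityMeasure (Q.map T) := Measure.isProbabilityMeasure_map hT.aemeasurable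
  haveI : IsFiniteMeasure μ' := by
    constructor
    rw [hμ'def, Measure.map_apply hT MeasurableSet.univ]
    exact measure_lt_top ν _
  have hPle : P.map T ≤ μ' := by
    rw [hμ'def, ← hνPQ]
    exact Measure.map_mono (Measure.le_add_right le_rfl) hT
  have hPT : P.map T ≪ μ' := Measure.absolutelyContinuous_of_le hPle
  have hmapadd : P.map T + Q.map T = μ' := by
    rw [hμ'def, ← hνPQ, Measure.map_add _ _ hT]
  have hpq'1 : ∀ᵐ y ∂μ', p' y + q' y = 1 := by
    have h1 := Measure.rnDeriv_add (P.map T) (Q.map T) μ'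
    have h3 := Measure.rnDeriv_self μ'
    rw [hmapadd] at h1
    filter_upwards [h1, h3] with y hy1 hy3
    rw [hp'def, hq'def, ← Pi.add_apply ((P.map T).rnDeriv μ') ((Q.map T).rnDeriv μ'), ← hy1, hy3]
  have hp'1 : ∀ᵐ y ∂μ', p' y ≤ 1 := by
    filter_upwards [hpq'1] with y hy
    rw [← hy]; exact le_self_add
  have hp'fin : ∀ᵐ y ∂μ', p' y ≠ ∞ :=
    (Measure.rnDeriv_lt_top _ _).mono fun y hy => hy.ne
  have hq'fin : ∀ᵐ y ∂μ', q' y ≠ ∞ :=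
    (Measure.rnDeriv_lt_top _ _).mono fun y hy => hy.ne
  have hcond : ∀ B : Set 𝒴, MeasurableSet B →
      ∫⁻ y in B, p' y ∂μ' = ∫⁻ x in T ⁻¹' B, p x ∂ν := by
    intro B hB
    rw [hp'def, Measure.setLIntegral_rnDeriv hPT B, Measure.map_apply hT hB]
    rw [hνdef, hpdef]
    exact (setLIntegral_div_withDensity lam hfP hsmeas
      (fun x => by rw [hsdef]; exact le_self_add) hsfin (hT hB)).symm
  -- affine family for gg φm
  obtain ⟨a, b, hmin, hsup⟩ := exists_affine_family φm hφmconv hφmnn φ0 φstar0 hφm0 hφmstar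
  -- the chain of (in)equalities
  have hmeasY : Measurable fun y => ENNReal.ofReal (φm ((p' y / q' y).toReal)) :=
    ENNReal.measurable_ofReal.comp (hφmmeas.comp (hp'meas.div hq'meas).ennreal_toReal)
  have hmeasX : Measurable fun x => ENNReal.ofReal (φm ((fP x / fQ x).toReal)) :=
    ENNReal.measurable_ofReal.comp (hφmmeas.comp (hfP.div hfQ).ennreal_toReal)
  have step1 : phiDiv φ φ0 φstar0 μ' p' q' = phiDiv φm φ0 φstar0 μ' p' q' :=
    phiDiv_congr μ' φ φm (fun t ht => (hφmeq t ht).symm) φ0 φstar0 hp'meas hq'meas hp'fin hq'fin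
  have step2 : phiDiv φm φ0 φstar0 μ' p' q'
      = ∫⁻ y, gg2 φm φ0 φstar0 (p' y) (q' y) ∂μ' :=
    phiDiv_eq_lintegral_gg2 μ' φm φ0 φstar0 hp'meas hq'meas hmeasY
  have step3 : ∫⁻ y, gg2 φm φ0 φstar0 (p' y) (q' y) ∂μ'
      = ∫⁻ y, gg φm φ0 φstar0 ((p' y).toReal) ∂μ' :=
    lintegral_congr_ae (hpq'1.mono fun y hy => gg2_eq_gg φm φ0 φstar0 hy)
  have step4 : ∫⁻ y, gg φm φ0 φstar0 ((p' y).toReal) ∂μ'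
      ≤ ∫⁻ x, gg φm φ0 φstar0 ((p x).toReal) ∂ν := by
    rw [hμ'def]
    exact jensen_core ν hT hpmeas.aemeasurable (ae_of_all _ hp1) hp'meas
      (hμ'def ▸ hp'1) (fun B hB => hμ'def ▸ hcond B hB) (gg φm φ0 φstar0) a b hmin hsup
  have step5 : ∫⁻ x, gg φm φ0 φstar0 ((p x).toReal) ∂ν
      = ∫⁻ x, gg2 φm φ0 φstar0 (p x) (q x) ∂ν :=
    (lintegral_congr_ae (hpq1.mono fun x hx => gg2_eq_gg φm φ0 φstar0 hx)).symm
  have step6 : ∫⁻ x, gg2 φm φ0 φstar0 (p x) (q x) ∂ν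
      = ∫⁻ x, gg2 φm φ0 φstar0 (fP x) (fQ x) ∂lam := by
    rw [hνdef, lintegral_withDensity_eq_lintegral_mul lam hsmeas
      (measurable_gg2 hφmmeas φ0 φstar0 hpmeas hqmeas)]
    refine lintegral_congr_ae ?_
    filter_upwards [hsfin] with x hxfin
    simp only [Pi.mul_apply]
    rcases eq_or_ne (s x) 0 with h0 | h0
    · have h1 : fP x = 0 := by
        have := h0; rw [hsdef] at this; exact (add_eq_zero.1 this).1
      have h2 : fQ x = 0 := by
        have := h0; rw [hsdef] at this; exact (add_eq_zero.1 this).2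
      rw [h0, hpdef, hqdef]
      dsimp only
      rw [h1, h2, zero_mul]
      rw [gg2]
      simp
    · rw [hpdef, hqdef]
      exact gg2_homog φm φ0 φstar0 h0 hxfin
  have step7 : ∫⁻ x, gg2 φm φ0 φstar0 (fP x) (fQ x) ∂lam
      = phiDiv φm φ0 φstar0 lam fP fQ :=
    (phiDiv_eq_lintegral_gg2 lam φm φ0 φstar0 hfP hfQ hmeasX).symm
  have step8 : phiDiv φm φ0 φstar0 lam fP fQ = phiDiv φ φ0 φstar0 lam fP fQ :=
    phiDiv_congr lam φm φ hφmeq φ0 φstar0 hfP hfQ hfPfin hfQfin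
  calc phiDiv φ φ0 φstar0 ((P + Q).map T) ((P.map T).rnDeriv ((P + Q).map T))
        ((Q.map T).rnDeriv ((P + Q).map T))
      = phiDiv φ φ0 φstar0 μ' p' q' := by rw [hνPQ, ← hμ'def, ← hp'def, ← hq'def]
  _ = ∫⁻ y, gg φm φ0 φstar0 ((p' y).toReal) ∂μ' := by rw [step1, step2, step3]
  _ ≤ ∫⁻ x, gg φm φ0 φstar0 ((p x).toReal) ∂ν := step4
  _ = phiDiv φ φ0 φstar0 lam fP fQ := by rw [step5, step6, step7, step8]
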